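/- Let (x^{0,N}, m^{0,N}) ∈ ℝ^{dN} × ℝ^N with Σ_i m_i^{0,N} = N and m_i^{0,N} > 0, let φ : ℝ^d → ℝ^d be Lipschitz with φ(0)=0, let S be bounded, Lipschitz and skew-symmetric in a pair of arguments, and define ψ_i^{(N)}(x^N,m^N) = N ∫_{(i−1)/N}^{i/N} ψ_{S,k}(s, P_c^N x^N, P_c^N m^N) ds. Then for any T > 0 there exists a unique solution (x^N, m^N) ∈ C¹([0,T]; ℝ^{dN} × ℝ^N) of d/dt x_i^N = (1/N) Σ_j m_j^N φ(x_j^N − x_i^N), d/dt m_i^N = ψ_i^{(N)}(x^N, m^N), and it satisfies: (i) m_i^N(t) > 0 for all i and t ∈ [0,T]; (ii) Σ_{i=1}^N m_i^N(t) = N for all t ∈ [0,T]; (iii) there exist constants X̄, M̄ with ‖x_i^N(t)‖ ≤ X̄ and |m_i^N(t)| ≤ M̄ for all i, t. -/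

import Mathlib

open MeasureTheory Set Filter Topology
open scoped NNReal ENNReal

noncomputable section

abbrev Euc (d : ℕ) := EuclideanSpace ℝ (Fin d)

/-- The measure on the index space `I = [0,1]`. -/
def muI : Measure ℝ := volume.restrict (Set.Icc (0:ℝ) 1)

/-- Piecewise-constant embedding `P_c^N`. -/
def Pc {α : Type*} [AddCommMonoid α] (N : ℕ) (v : Fin N → α) : ℝ → α :=
  fun s => ∑ i : Fin N, Set.indicator (Set.Ico ((i : ℝ) / N) (((i : ℝ) + 1) / N)) (fun _ => v i) s

/-- The mass dynamics
`ψ_{S,k}(s,x,m) = m(s) ∫_{I^k} m(s_1)⋯m(s_k) S(x(s), x(s_1),…,x(s_k)) ds_1⋯ds_k`. -/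
def psiSk {d : ℕ} (k : ℕ) (S : (Fin (k+1) → Euc d) → ℝ)
    (s : ℝ) (x : ℝ → Euc d) (m : ℝ → ℝ) : ℝ :=
  m s * ∫ σ : Fin k → ℝ, (∏ l, m (σ l)) * S (Fin.cons (x s) (fun l => x (σ l)))
      ∂(Measure.pi fun _ => muI)

/-- `(x, m)` solves the discrete system on `[0,T]` with mass dynamics
`ψ_i^{(N)} = N ∫_{(i-1)/N}^{i/N} ψ_{S,k}(s, P_c^N x, P_c^N m) ds`. -/
def MicroSolS {d : ℕ} (T : ℝ) (N k : ℕ) (φ : Euc d → Euc d)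
    (S : (Fin (k+1) → Euc d) → ℝ)
    (xinit : Fin N → Euc d) (minit : Fin N → ℝ)
    (x : ℝ → Fin N → Euc d) (m : ℝ → Fin N → ℝ) : Prop :=
  x 0 = xinit ∧ m 0 = minit ∧
  ∀ t ∈ Set.Icc (0:ℝ) T, ∀ i : Fin N,
    HasDerivWithinAt (fun τ => x τ i)
      ((N : ℝ)⁻¹ • ∑ j : Fin N, m t j • φ (x t j - x t i)) (Set.Icc 0 T) t ∧
    HasDerivWithinAt (fun τ => m τ i)
      ((N : ℝ) * ∫ s in Set.Ico ((i : ℝ) / N) (((i : ℝ) + 1) / N),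
          psiSk k S s (Pc N (x t)) (Pc N (m t))) (Set.Icc 0 T) t





/-- real clamp -/
def thC (M a : ℝ) : ℝ := max (-M) (min a M)

lemma thC_eq {M a : ℝ} (h1 : -M ≤ a) (h2 : a ≤ M) : thC M a = a := by
  simp [thC, min_eq_left h2, max_eq_right h1]

lemma abs_thC_le (M : ℝ) (hM : 0 ≤ M) (a : ℝ) : |thC M a| ≤ M := by
  rw [abs_le]; constructor
  · exact le_max_left _ _
  · exact max_le (by linarith) (min_le_right _ _)

lemma abs_thC_le_abs (M : ℝ) (hM : 0 ≤ M) (a : ℝ) : |thC M a| ≤ |a| := by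
  rw [abs_le]
  refine ⟨?_, max_le (by linarith [abs_nonneg a]) ((min_le_left a M).trans (le_abs_self a))⟩
  rcases le_total a M with h | h
  · calc -|a| ≤ a := neg_abs_le a
      _ = min a M := (min_eq_left h).symm
      _ ≤ _ := le_max_right _ _
  · calc -|a| ≤ 0 := neg_nonpos.2 (abs_nonneg a)
      _ ≤ M := hM
      _ = min a M := (min_eq_right h).symm
      _ ≤ _ := le_max_right _ _

lemma lipschitzWith_thC (M : ℝ) : LipschitzWith 1 (thC M) := by
  have h1 : LipschitzWith 1 (fun a : ℝ => min a M) := LipschitzWith.id.min_const M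
  have h2 := (LipschitzWith.const (α := ℝ) (-M)).max h1
  exact (by simpa [max_self] using h2 : LipschitzWith 1 (fun a : ℝ => max (-M) (min a M)))


variable {F : Type*} [NormedAddCommGroup F] [NormedSpace ℝ F]

/-- clamp to closed ball of radius R -/
def clB (R : ℝ) (y : F) : F := if ‖y‖ ≤ R then y else (R / ‖y‖) • y

lemma clB_eq {R : ℝ} {y : F} (h : ‖y‖ ≤ R) : clB R y = y := if_pos h

lemma clB_coeff {R : ℝ} (hR : 0 ≤ R) (y : F) :
    ∃ b : ℝ, clB R y = b • y ∧ 0 ≤ b ∧ b ≤ 1 ∧ b * ‖y‖ ≤ R := by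
  unfold clB
  split_ifs with h
  · exact ⟨1, (one_smul ℝ y).symm, zero_le_one, le_rfl, by simpa using h⟩
  · push_neg at h
    have hy0 : 0 < ‖y‖ := lt_of_le_of_lt hR h
    refine ⟨R / ‖y‖, rfl, div_nonneg hR hy0.le, (div_le_one hy0).2 h.le, ?_⟩
    rw [div_mul_cancel₀ _ hy0.ne']

lemma norm_clB_le_norm {R : ℝ} (hR : 0 ≤ R) (y : F) : ‖clB R y‖ ≤ ‖y‖ := by
  obtain ⟨b, hb, hb0, hb1, _⟩ := clB_coeff hR y
  rw [hb, norm_smul, Real.norm_eq_abs, abs_of_nonneg hb0]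
  nlinarith [norm_nonneg y]

lemma norm_clB_le {R : ℝ} (hR : 0 ≤ R) (y : F) : ‖clB R y‖ ≤ R := by
  obtain ⟨b, hb, hb0, _, hbR⟩ := clB_coeff hR y
  rw [hb, norm_smul, Real.norm_eq_abs, abs_of_nonneg hb0]; exact hbR

lemma norm_clB_sub_le {R : ℝ} (hR : 0 ≤ R) (y z : F) (hzy : ‖z‖ ≤ ‖y‖) :
    ‖clB R y - clB R z‖ ≤ 2 * ‖y - z‖ := by
  rcases le_or_gt ‖y‖ R with h | h
  · rw [clB_eq h, clB_eq (hzy.trans h)]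
    nlinarith [norm_nonneg (y - z)]
  · have hy0 : 0 < ‖y‖ := lt_of_le_of_lt hR h
    set a : ℝ := R / ‖y‖ with ha_def
    have hcy : clB R y = a • y := if_neg (not_le.2 h)
    have ha0 : 0 ≤ a := div_nonneg hR hy0.le
    have ha1 : a ≤ 1 := (div_le_one hy0).2 h.le
    have haR : a * ‖y‖ = R := div_mul_cancel₀ _ hy0.ne'
    obtain ⟨b, hcz, hb0, hbR, hab⟩ :
        ∃ b : ℝ, clB R z = b • z ∧ 0 ≤ b ∧ b * ‖z‖ ≤ R ∧ a ≤ b := by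
      rcases le_or_gt ‖z‖ R with h2 | h2
      · exact ⟨1, (clB_eq h2).trans (one_smul ℝ z).symm, zero_le_one, by simpa using h2, ha1⟩
      · have hz0 : 0 < ‖z‖ := lt_of_le_of_lt hR h2
        refine ⟨R / ‖z‖, if_neg (not_le.2 h2), div_nonneg hR hz0.le,
          by rw [div_mul_cancel₀ _ hz0.ne'], ?_⟩
        rw [ha_def, div_le_div_iff₀ hy0 hz0]
        nlinarith
    have hdecomp : clB R y - clB R z = a • (y - z) + (a - b) • z := by
      rw [hcy, hcz, smul_sub, sub_smul]; abel
    have hval : ‖clB R y - clB R z‖ ≤ a * ‖y - z‖ + (b - a) * ‖z‖ := by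
      rw [hdecomp]
      refine (norm_add_le _ _).trans ?_
      rw [norm_smul, norm_smul, Real.norm_eq_abs, Real.norm_eq_abs,
        abs_of_nonneg ha0, abs_of_nonpos (by linarith : a - b ≤ 0)]
      simp [neg_sub]
    refine hval.trans ?_
    have h1 : (b - a) * ‖z‖ ≤ a * (‖y‖ - ‖z‖) := by nlinarith
    have h2 : a * (‖y‖ - ‖z‖) ≤ ‖y‖ - ‖z‖ := by nlinarith
    have h3 : ‖y‖ - ‖z‖ ≤ ‖y - z‖ := by
      have := norm_sub_norm_le y z; linarith [le_abs_self (‖y‖ - ‖z‖)]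
    nlinarith [norm_nonneg (y - z)]

lemma lipschitzWith_clB {R : ℝ} (hR : 0 ≤ R) : LipschitzWith 2 (clB (F := F) R) := by
  refine LipschitzWith.of_dist_le_mul fun y z => ?_
  simp only [dist_eq_norm]
  rcases le_total ‖z‖ ‖y‖ with h | h
  · simpa using norm_clB_sub_le hR y z h
  · rw [norm_sub_rev, norm_sub_rev y z]
    simpa using norm_clB_sub_le hR z y h
section PcInt

variable {N : ℕ}

lemma Ico_unique (hN : 0 < N) {i p : Fin N} {s : ℝ}
    (hi : s ∈ Set.Ico ((i : ℝ) / N) (((i : ℝ) + 1) / N))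
    (hp : s ∈ Set.Ico ((p : ℝ) / N) (((p : ℝ) + 1) / N)) : p = i := by
  have hNpos : (0:ℝ) < N := by exact_mod_cast hN
  have h1 : (i : ℝ) < (p : ℝ) + 1 := by
    have := lt_of_le_of_lt hi.1 hp.2
    rw [div_lt_div_iff₀ hNpos hNpos] at this
    nlinarith
  have h2 : (p : ℝ) < (i : ℝ) + 1 := by
    have := lt_of_le_of_lt hp.1 hi.2
    rw [div_lt_div_iff₀ hNpos hNpos] at this
    nlinarith
  have h1' : (i : ℕ) < (p : ℕ) + 1 := by exact_mod_cast h1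
  have h2' : (p : ℕ) < (i : ℕ) + 1 := by exact_mod_cast h2
  exact Fin.ext (by omega)

lemma Pc_eval {α : Type*} [AddCommMonoid α] (hN : 0 < N) (v : Fin N → α) {i : Fin N} {s : ℝ}
    (hs : s ∈ Set.Ico ((i : ℝ) / N) (((i : ℝ) + 1) / N)) : Pc N v s = v i := by
  unfold Pc
  rw [Finset.sum_eq_single i]
  · exact Set.indicator_of_mem hs _
  · intro p _ hp
    refine Set.indicator_of_notMem (fun hsp => hp ?_) _
    exact Ico_unique hN hs hsp
  · simp

lemma exists_idx (hN : 0 < N) {s : ℝ} (hs : s ∈ Set.Ico (0:ℝ) 1) :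
    ∃ i : Fin N, s ∈ Set.Ico ((i : ℝ) / N) (((i : ℝ) + 1) / N) := by
  have hNpos : (0:ℝ) < N := by exact_mod_cast hN
  have hsn : 0 ≤ s * N := mul_nonneg hs.1 hNpos.le
  refine ⟨⟨⌊s * N⌋₊, ?_⟩, ?_, ?_⟩
  · rw [Nat.floor_lt hsn]
    calc s * N < 1 * N := by nlinarith [hs.2]
      _ = N := one_mul _
  · rw [div_le_iff₀ hNpos]
    simpa using Nat.floor_le hsn
  · rw [lt_div_iff₀ hNpos]
    simpa using Nat.lt_floor_add_one (s * N)

instance : IsProbabilityMeasure muI := by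
  constructor
  simp [muI, Real.volume_Icc]

lemma muI_compl_Ico : muI (Set.Ico (0:ℝ) 1)ᶜ = 0 := by
  rw [muI, Measure.restrict_apply measurableSet_Ico.compl]
  have : (Set.Ico (0:ℝ) 1)ᶜ ∩ Set.Icc 0 1 = {1} := by
    ext x
    simp only [Set.mem_inter_iff, Set.mem_compl_iff, Set.mem_Ico, Set.mem_Icc,
      Set.mem_singleton_iff, not_and, not_lt]
    constructor
    · rintro ⟨h1, h2, h3⟩; linarith [h1 h2]
    · rintro rfl; exact ⟨fun _ => le_rfl, zero_le_one, le_rfl⟩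
  rw [this]
  exact Real.volume_singleton

lemma muI_Ico (hN : 0 < N) (i : Fin N) :
    muI (Set.Ico ((i : ℝ) / N) (((i : ℝ) + 1) / N)) = ENNReal.ofReal (1 / N) := by
  have hNpos : (0:ℝ) < N := by exact_mod_cast hN
  have hsub : Set.Ico ((i : ℝ) / N) (((i : ℝ) + 1) / N) ⊆ Set.Icc 0 1 := by
    intro s hs
    have h1 : (0:ℝ) ≤ (i : ℝ) / N := div_nonneg (by positivity) hNpos.le
    have h2 : ((i : ℝ) + 1) / N ≤ 1 := by
      rw [div_le_one hNpos]
      have : (i : ℕ) < N := i.2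
      exact_mod_cast Nat.succ_le_of_lt this
    exact ⟨le_trans h1 hs.1, le_of_lt (lt_of_lt_of_le hs.2 h2)⟩
  rw [muI, Measure.restrict_apply measurableSet_Ico, Set.inter_eq_left.2 hsub,
    Real.volume_Ico]
  congr 1
  field_simp
  ring

lemma integral_pi_pc {k : ℕ} (hN : 0 < N) (c : (Fin k → Fin N) → ℝ) (F : (Fin k → ℝ) → ℝ)
    (hF : ∀ (σ : Fin k → ℝ) (j : Fin k → Fin N),
      (∀ l, σ l ∈ Set.Ico ((j l : ℝ) / N) (((j l : ℝ) + 1) / N)) → F σ = c j) :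
    ∫ σ : Fin k → ℝ, F σ ∂(Measure.pi fun _ => muI)
      = ((N : ℝ) ^ k)⁻¹ * ∑ j : Fin k → Fin N, c j := by
  set π := Measure.pi (fun _ : Fin k => muI) with hπ
  set B : (Fin k → Fin N) → Set (Fin k → ℝ) := fun j =>
    Set.univ.pi fun l => Set.Ico ((j l : ℝ) / N) (((j l : ℝ) + 1) / N) with hB
  have hBmeas : ∀ j, MeasurableSet (B j) :=
    fun j => MeasurableSet.univ_pi fun l => measurableSet_Ico
  have hgood : π {σ : Fin k → ℝ | ¬ ∀ l, σ l ∈ Set.Ico (0:ℝ) 1} = 0 := by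
    have : {σ : Fin k → ℝ | ¬ ∀ l, σ l ∈ Set.Ico (0:ℝ) 1}
        ⊆ ⋃ l, Function.eval l ⁻¹' (Set.Ico (0:ℝ) 1)ᶜ := by
      intro σ hσ
      push_neg at hσ
      obtain ⟨l, hl⟩ := hσ
      exact Set.mem_iUnion.2 ⟨l, hl⟩
    refine measure_mono_null this (measure_iUnion_null fun l => ?_)
    exact MeasureTheory.Measure.pi_eval_preimage_null _ muI_compl_Ico
  have hae : F =ᵐ[π] fun σ => ∑ j : Fin k → Fin N, (B j).indicator (fun _ => c j) σ := by
    rw [Filter.EventuallyEq, ae_iff]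
    refine measure_mono_null (fun σ hσ => ?_) hgood
    simp only [Set.mem_setOf_eq] at hσ ⊢
    intro hσ'
    apply hσ
    choose j hj using fun l => exists_idx hN (hσ' l)
    rw [hF σ j hj, Finset.sum_eq_single j]
    · rw [Set.indicator_of_mem (by exact fun l _ => hj l)]
    · intro j' _ hj'
      refine Set.indicator_of_notMem (fun hσj' => hj' ?_) _
      funext l
      exact Ico_unique hN (hj l) (hσj' l (Set.mem_univ l))
    · simp
  rw [integral_congr_ae hae, integral_finset_sum]
  · have hone : ∀ j : Fin k → Fin N, π (B j) = ENNReal.ofReal (1/N) ^ k := by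
      intro j
      rw [hπ, hB, MeasureTheory.Measure.pi_pi]
      simp [muI_Ico hN]
    have : ∀ j : Fin k → Fin N,
        ∫ σ, (B j).indicator (fun _ => c j) σ ∂π = ((N : ℝ) ^ k)⁻¹ * c j := by
      intro j
      rw [integral_indicator_const _ (hBmeas j), measureReal_def, hone j, smul_eq_mul]
      congr 1
      rw [ENNReal.toReal_pow, ENNReal.toReal_ofReal (by positivity)]
      rw [one_div, inv_pow]
    simp only [this, ← Finset.mul_sum]
  · intro j _
    exact (integrable_const (c j)).indicator (hBmeas j)

def Qm {d : ℕ} (N k : ℕ) (S : (Fin (k+1) → Euc d) → ℝ)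
    (x : Fin N → Euc d) (m : Fin N → ℝ) (i : Fin N) : ℝ :=
  m i * (((N : ℝ) ^ k)⁻¹ *
    ∑ j : Fin k → Fin N, (∏ l, m (j l)) * S (Fin.cons (x i) fun l => x (j l)))

lemma keyA {d : ℕ} {k : ℕ} (hN : 0 < N) (S : (Fin (k+1) → Euc d) → ℝ)
    (x : Fin N → Euc d) (m : Fin N → ℝ) (i : Fin N) :
    (N : ℝ) * ∫ s in Set.Ico ((i : ℝ) / N) (((i : ℝ) + 1) / N),
        psiSk k S s (Pc N x) (Pc N m) = Qm N k S x m i := by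
  have hNpos : (0:ℝ) < N := by exact_mod_cast hN
  have hconst : Set.EqOn (fun s => psiSk k S s (Pc N x) (Pc N m))
      (fun _ => Qm N k S x m i)
      (Set.Ico ((i : ℝ) / N) (((i : ℝ) + 1) / N)) := by
    intro s hs
    show psiSk k S s (Pc N x) (Pc N m) = Qm N k S x m i
    unfold psiSk
    rw [Pc_eval hN m hs, Pc_eval hN x hs]
    unfold Qm
    congr 1
    exact integral_pi_pc hN _ _ (fun σ j hj => by
      congr 1
      · exact Finset.prod_congr rfl fun l _ => Pc_eval hN m (hj l)
      · have hfun : (fun l => Pc N x (σ l)) = fun l => x (j l) :=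
          funext fun l => Pc_eval hN x (hj l)
        rw [hfun])
  rw [setIntegral_congr_fun measurableSet_Ico hconst, setIntegral_const, measureReal_def, Real.volume_Ico,
    smul_eq_mul]
  have : ((i : ℝ) + 1) / N - (i : ℝ) / N = 1 / N := by field_simp; ring
  rw [this, ENNReal.toReal_ofReal (by positivity)]
  field_simp
lemma abs_prod_sub_prod_le {ι : Type*} (s : Finset ι) (a b : ι → ℝ) (M : ℝ) (hM : 1 ≤ M)
    (ha : ∀ l, |a l| ≤ M) (hb : ∀ l, |b l| ≤ M) :
    |∏ l ∈ s, a l - ∏ l ∈ s, b l| ≤ M ^ s.card * ∑ l ∈ s, |a l - b l| := by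
  induction s using Finset.cons_induction with
  | empty => simp
  | cons l s hl ih =>
    rw [Finset.prod_cons, Finset.prod_cons, Finset.sum_cons, Finset.card_cons]
    have h1 : |a l * ∏ x ∈ s, a x - b l * ∏ x ∈ s, b x|
        ≤ |a l - b l| * |∏ x ∈ s, a x| + |b l| * |∏ x ∈ s, a x - ∏ x ∈ s, b x| := by
      calc |a l * ∏ x ∈ s, a x - b l * ∏ x ∈ s, b x|
          = |(a l - b l) * ∏ x ∈ s, a x + b l * (∏ x ∈ s, a x - ∏ x ∈ s, b x)| := by ring_nf
        _ ≤ _ := by rw [← abs_mul, ← abs_mul]; exact abs_add_le _ _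
    have h2 : |∏ x ∈ s, a x| ≤ M ^ s.card := by
      rw [Finset.abs_prod]
      calc ∏ x ∈ s, |a x| ≤ ∏ _x ∈ s, M :=
            Finset.prod_le_prod (fun x _ => abs_nonneg _) (fun x _ => ha x)
        _ = M ^ s.card := Finset.prod_const M
    have h3 : 0 ≤ M ^ s.card := by positivity
    have h4 : M ^ s.card ≤ M ^ (s.card + 1) :=
      pow_le_pow_right₀ hM (Nat.le_succ _)
    have h5 : 0 ≤ ∑ x ∈ s, |a x - b x| := Finset.sum_nonneg fun x _ => abs_nonneg _
    calc |a l * ∏ x ∈ s, a x - b l * ∏ x ∈ s, b x|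
        ≤ |a l - b l| * M ^ s.card + M * (M ^ s.card * ∑ x ∈ s, |a x - b x|) := by
          have := mul_le_mul (hb l) ih (abs_nonneg _) (by linarith : (0:ℝ) ≤ M)
          nlinarith [abs_nonneg (a l - b l), abs_nonneg (∏ x ∈ s, a x - ∏ x ∈ s, b x),
            mul_le_mul_of_nonneg_left h2 (abs_nonneg (a l - b l))]
      _ ≤ M ^ (s.card + 1) * (|a l - b l| + ∑ x ∈ s, |a x - b x|) := by
          rw [pow_succ]
          nlinarith [mul_nonneg (mul_nonneg h3 (abs_nonneg (a l - b l)))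
            (sub_nonneg.2 hM)]

lemma cons_comp {M : Type*} {N : ℕ} {k : ℕ} (x : Fin N → M) (i : Fin N) (j : Fin k → Fin N) :
    (fun l : Fin (k+1) => x (Fin.cons (α := fun _ => Fin N) i j l))
      = Fin.cons (x i) (fun l => x (j l)) := by
  funext l
  refine Fin.cases ?_ ?_ l <;> simp

lemma sum_Qm_eq_zero {d N : ℕ} {k : ℕ} {S : (Fin (k+1) → Euc d) → ℝ}
    (hSskew : ∃ i j : Fin (k+1), ∀ y, S y = - S (y ∘ Equiv.swap i j))
    (x : Fin N → Euc d) (m : Fin N → ℝ) :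
    ∑ i, Qm N k S x m i = 0 := by
  obtain ⟨a, b, hab⟩ := hSskew
  set W : (Fin (k+1) → Fin N) → ℝ :=
    fun w => (∏ l, m (w l)) * S (fun l => x (w l)) with hW
  have hWzero : ∑ w : Fin (k+1) → Fin N, W w = 0 := by
    have he : ∀ w : Fin (k+1) → Fin N, W (w ∘ Equiv.swap a b) = - W w := by
      intro w
      have h := hab (fun l => x (w l))
      have hprod : (∏ l, m ((w ∘ Equiv.swap a b) l)) = ∏ l, m (w l) :=
        Equiv.prod_comp (Equiv.swap a b) (fun l => m (w l))
      have hS : S (fun l => x ((w ∘ Equiv.swap a b) l)) = - S (fun l => x (w l)) := by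
        show S ((fun l => x (w l)) ∘ (Equiv.swap a b)) = - S (fun l => x (w l))
        linarith [h]
      simp only [hW]
      rw [show (fun l => m ((w ∘ ⇑(Equiv.swap a b)) l)) = fun l => m ((w ∘ Equiv.swap a b) l)
        from rfl] at hprod
      calc (∏ l, m ((w ∘ ⇑(Equiv.swap a b)) l)) * S (fun l => x ((w ∘ ⇑(Equiv.swap a b)) l))
          = (∏ l, m (w l)) * (- S (fun l => x (w l))) := by rw [hprod, hS]
        _ = -((∏ l, m (w l)) * S (fun l => x (w l))) := by ring
    have hinv : Function.Involutive (fun w : Fin (k+1) → Fin N => w ∘ Equiv.swap a b) := by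
      intro w
      funext l
      simp [Function.comp, Equiv.swap_apply_self]
    have hcomp : ∑ w : Fin (k+1) → Fin N, W (w ∘ Equiv.swap a b)
        = ∑ w : Fin (k+1) → Fin N, W w := hinv.bijective.sum_comp W
    simp only [he] at hcomp
    rw [Finset.sum_neg_distrib] at hcomp
    linarith
  have hQ : ∀ i, Qm N k S x m i
      = ∑ j : Fin k → Fin N, ((N : ℝ) ^ k)⁻¹ * W (Fin.cons i j) := by
    intro i
    unfold Qm
    rw [Finset.mul_sum, Finset.mul_sum]
    apply Finset.sum_congr rfl
    intro j _
    have h2 : W (Fin.cons i j) = (m i * ∏ l, m (j l)) * S (Fin.cons (x i) fun l => x (j l)) := by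
      simp only [hW]
      rw [show (fun l : Fin (k+1) => m (Fin.cons (α := fun _ => Fin N) i j l))
          = Fin.cons (m i) (fun l => m (j l)) from cons_comp m i j,
        show (fun l : Fin (k+1) => x (Fin.cons (α := fun _ => Fin N) i j l))
          = Fin.cons (x i) (fun l => x (j l)) from cons_comp x i j,
        Fin.prod_cons]
    rw [h2]
    ring
  simp only [hQ]
  rw [← Fintype.sum_prod_type', ← Finset.mul_sum]
  have hsum : ∑ p : Fin N × (Fin k → Fin N), W (Fin.cons p.1 p.2)
      = ∑ w : Fin (k+1) → Fin N, W w :=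
    Equiv.sum_comp (Fin.consEquiv (fun _ : Fin (k+1) => Fin N)) W
  rw [hsum, hWzero, mul_zero]
lemma distfst {α β : Type*} [PseudoMetricSpace α] [PseudoMetricSpace β] (p q : α × β) :
    dist p.1 q.1 ≤ dist p q := by rw [Prod.dist_eq]; exact le_max_left _ _

lemma distsnd {α β : Type*} [PseudoMetricSpace α] [PseudoMetricSpace β] (p q : α × β) :
    dist p.2 q.2 ≤ dist p q := by rw [Prod.dist_eq]; exact le_max_right _ _

abbrev ES (d N : ℕ) := (Fin N → Euc d) × (Fin N → ℝ)

section Field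

variable {d N k : ℕ} (φ : Euc d → Euc d) (S : (Fin (k+1) → Euc d) → ℝ) (Mc Rc : ℝ)

/-- truncated x-field -/
def gX (p : ES d N) : Fin N → Euc d :=
  fun i => (N : ℝ)⁻¹ • ∑ j, thC Mc (p.2 j) • φ (clB Rc (p.1 j - p.1 i))

/-- truncated m-field -/
def gM (p : ES d N) : Fin N → ℝ :=
  fun i => Qm N k S p.1 (fun j => thC Mc (p.2 j)) i

def Fv (p : ES d N) : ES d N := (gX φ Mc Rc p, gM S Mc p)

/-- the plain (untruncated) field -/
def Gpl (p : ES d N) : ES d N :=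
  (fun i => (N : ℝ)⁻¹ • ∑ j, p.2 j • φ (p.1 j - p.1 i), fun i => Qm N k S p.1 p.2 i)

variable {φ S Mc Rc}
variable {Lφ : ℝ≥0} {Sbar LS : ℝ}

section Bounds

variable (hφ : LipschitzWith Lφ φ) (hφ0 : φ 0 = 0) (hMc : 1 ≤ Mc) (hRc : 0 ≤ Rc)
  (hSb : ∀ y, |S y| ≤ Sbar)
  (hSlip : ∀ y z, |S y - S z| ≤ LS * ∑ i, ‖y i - z i‖)

include hφ hφ0 in
lemma norm_phi_le (y : Euc d) : ‖φ y‖ ≤ (Lφ : ℝ) * ‖y‖ := by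
  have := hφ.dist_le_mul y 0
  simpa [hφ0, dist_eq_norm] using this

include hφ hφ0 hMc hRc in
lemma norm_gX_le (hN : 0 < N) (p : ES d N) (i : Fin N) :
    ‖gX φ Mc Rc p i‖ ≤ Mc * ((Lφ : ℝ) * Rc) := by
  unfold gX
  rw [norm_smul, Real.norm_eq_abs, abs_inv, abs_of_nonneg (by positivity : (0:ℝ) ≤ (N:ℝ))]
  have hNpos : (0:ℝ) < N := by exact_mod_cast hN
  have hterm : ∀ j : Fin N, ‖thC Mc (p.2 j) • φ (clB Rc (p.1 j - p.1 i))‖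
      ≤ Mc * ((Lφ : ℝ) * Rc) := by
    intro j
    rw [norm_smul, Real.norm_eq_abs]
    have h1 : |thC Mc (p.2 j)| ≤ Mc := abs_thC_le Mc (by linarith) _
    have h2 : ‖φ (clB Rc (p.1 j - p.1 i))‖ ≤ (Lφ : ℝ) * Rc := by
      refine (norm_phi_le hφ hφ0 _).trans ?_
      exact mul_le_mul_of_nonneg_left (norm_clB_le hRc _) (by positivity)
    exact mul_le_mul h1 h2 (norm_nonneg _) (by linarith)
  calc (N:ℝ)⁻¹ * ‖∑ j, thC Mc (p.2 j) • φ (clB Rc (p.1 j - p.1 i))‖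
      ≤ (N:ℝ)⁻¹ * ∑ j, ‖thC Mc (p.2 j) • φ (clB Rc (p.1 j - p.1 i))‖ := by
        exact mul_le_mul_of_nonneg_left (norm_sum_le _ _) (by positivity)
    _ ≤ (N:ℝ)⁻¹ * ∑ _j : Fin N, Mc * ((Lφ : ℝ) * Rc) := by
        refine mul_le_mul_of_nonneg_left (Finset.sum_le_sum fun j _ => hterm j) (by positivity)
    _ = Mc * ((Lφ : ℝ) * Rc) := by
        rw [Finset.sum_const, Finset.card_univ, Fintype.card_fin, nsmul_eq_mul]
        field_simp

include hMc hSb in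
lemma abs_gM_le (hN : 0 < N) (p : ES d N) (i : Fin N) :
    |gM S Mc p i| ≤ Mc ^ (k+1) * Sbar := by
  have hMc0 : (0:ℝ) ≤ Mc := by linarith
  have hSb0 : 0 ≤ Sbar := le_trans (abs_nonneg _) (hSb fun _ => 0)
  have hNpos : (0:ℝ) < N := by exact_mod_cast hN
  unfold gM Qm
  rw [abs_mul, abs_mul]
  have h1 : |thC Mc (p.2 i)| ≤ Mc := abs_thC_le Mc hMc0 _
  have h2 : |(((N : ℝ) ^ k)⁻¹)| = ((N:ℝ)^k)⁻¹ := abs_of_nonneg (by positivity)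
  have h3 : |∑ j : Fin k → Fin N, (∏ l, thC Mc (p.2 (j l)))
      * S (Fin.cons (p.1 i) fun l => p.1 (j l))| ≤ (N:ℝ)^k * (Mc ^ k * Sbar) := by
    refine (Finset.abs_sum_le_sum_abs _ _).trans ?_
    have hterm : ∀ j : Fin k → Fin N, |(∏ l, thC Mc (p.2 (j l)))
        * S (Fin.cons (p.1 i) fun l => p.1 (j l))| ≤ Mc ^ k * Sbar := by
      intro j
      rw [abs_mul]
      refine mul_le_mul ?_ (hSb _) (abs_nonneg _) (by positivity)
      rw [Finset.abs_prod]
      calc ∏ l, |thC Mc (p.2 (j l))| ≤ ∏ _l : Fin k, Mc :=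
            Finset.prod_le_prod (fun _ _ => abs_nonneg _) (fun l _ => abs_thC_le Mc hMc0 _)
        _ = Mc ^ k := by rw [Finset.prod_const, Finset.card_univ, Fintype.card_fin]
    calc ∑ j : Fin k → Fin N, |(∏ l, thC Mc (p.2 (j l)))
        * S (Fin.cons (p.1 i) fun l => p.1 (j l))|
        ≤ ∑ _j : Fin k → Fin N, Mc ^ k * Sbar := Finset.sum_le_sum fun j _ => hterm j
      _ = (N:ℝ)^k * (Mc ^ k * Sbar) := by
          rw [Finset.sum_const, Finset.card_univ, Fintype.card_fun, Fintype.card_fin,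
            Fintype.card_fin, nsmul_eq_mul]
          push_cast
          ring
  calc |thC Mc (p.2 i)| * (|((N : ℝ) ^ k)⁻¹| * |∑ j : Fin k → Fin N, (∏ l, thC Mc (p.2 (j l)))
      * S (Fin.cons (p.1 i) fun l => p.1 (j l))|)
      ≤ Mc * (((N:ℝ)^k)⁻¹ * ((N:ℝ)^k * (Mc ^ k * Sbar))) := by
        rw [h2]
        refine mul_le_mul h1 (mul_le_mul_of_nonneg_left h3 (by positivity)) ?_ hMc0
        positivity
    _ = Mc ^ (k+1) * Sbar := by
        field_simp
        ring
include hMc hSb in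
lemma abs_gM_le_self (hN : 0 < N) (p : ES d N) (i : Fin N) :
    |gM S Mc p i| ≤ (Mc ^ k * Sbar) * |p.2 i| := by
  have hMc0 : (0:ℝ) ≤ Mc := by linarith
  have hSb0 : 0 ≤ Sbar := le_trans (abs_nonneg _) (hSb fun _ => 0)
  have hNpos : (0:ℝ) < N := by exact_mod_cast hN
  unfold gM Qm
  rw [abs_mul, abs_mul]
  have h1 : |thC Mc (p.2 i)| ≤ |p.2 i| := abs_thC_le_abs Mc hMc0 _
  have h2 : |(((N : ℝ) ^ k)⁻¹)| = ((N:ℝ)^k)⁻¹ := abs_of_nonneg (by positivity)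
  have h3 : |∑ j : Fin k → Fin N, (∏ l, thC Mc (p.2 (j l)))
      * S (Fin.cons (p.1 i) fun l => p.1 (j l))| ≤ (N:ℝ)^k * (Mc ^ k * Sbar) := by
    refine (Finset.abs_sum_le_sum_abs _ _).trans ?_
    have hterm : ∀ j : Fin k → Fin N, |(∏ l, thC Mc (p.2 (j l)))
        * S (Fin.cons (p.1 i) fun l => p.1 (j l))| ≤ Mc ^ k * Sbar := by
      intro j
      rw [abs_mul]
      refine mul_le_mul ?_ (hSb _) (abs_nonneg _) (by positivity)
      rw [Finset.abs_prod]
      calc ∏ l, |thC Mc (p.2 (j l))| ≤ ∏ _l : Fin k, Mc :=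
            Finset.prod_le_prod (fun _ _ => abs_nonneg _) (fun l _ => abs_thC_le Mc hMc0 _)
        _ = Mc ^ k := by rw [Finset.prod_const, Finset.card_univ, Fintype.card_fin]
    calc ∑ j : Fin k → Fin N, |(∏ l, thC Mc (p.2 (j l)))
        * S (Fin.cons (p.1 i) fun l => p.1 (j l))|
        ≤ ∑ _j : Fin k → Fin N, Mc ^ k * Sbar := Finset.sum_le_sum fun j _ => hterm j
      _ = (N:ℝ)^k * (Mc ^ k * Sbar) := by
          rw [Finset.sum_const, Finset.card_univ, Fintype.card_fun, Fintype.card_fin,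
            Fintype.card_fin, nsmul_eq_mul]
          push_cast
          ring
  calc |thC Mc (p.2 i)| * (|((N : ℝ) ^ k)⁻¹| * |∑ j : Fin k → Fin N, (∏ l, thC Mc (p.2 (j l)))
      * S (Fin.cons (p.1 i) fun l => p.1 (j l))|)
      ≤ |p.2 i| * (((N:ℝ)^k)⁻¹ * ((N:ℝ)^k * (Mc ^ k * Sbar))) := by
        rw [h2]
        refine mul_le_mul h1 (mul_le_mul_of_nonneg_left h3 (by positivity)) ?_ (abs_nonneg _)
        positivity
    _ = (Mc ^ k * Sbar) * |p.2 i| := by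
        field_simp

end Bounds

section Lip

variable (hφ : LipschitzWith Lφ φ) (hφ0 : φ 0 = 0) (hMc : 1 ≤ Mc) (hRc : 0 ≤ Rc)
  (hSb : ∀ y, |S y| ≤ Sbar)
  (hSlip : ∀ y z, |S y - S z| ≤ LS * ∑ i, ‖y i - z i‖)

include hφ hφ0 hMc hRc in
lemma dist_gX_le (hN : 0 < N) (p q : ES d N) (i : Fin N) :
    ‖gX φ Mc Rc p i - gX φ Mc Rc q i‖
      ≤ ((Lφ : ℝ) * Rc + 4 * Mc * (Lφ : ℝ)) * dist p q := by
  have hMc0 : (0:ℝ) ≤ Mc := by linarith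
  have hNpos : (0:ℝ) < N := by exact_mod_cast hN
  have hdist0 : (0:ℝ) ≤ dist p q := dist_nonneg
  have hterm : ∀ j : Fin N,
      ‖thC Mc (p.2 j) • φ (clB Rc (p.1 j - p.1 i))
        - thC Mc (q.2 j) • φ (clB Rc (q.1 j - q.1 i))‖
      ≤ ((Lφ : ℝ) * Rc + 4 * Mc * (Lφ : ℝ)) * dist p q := by
    intro j
    set a := thC Mc (p.2 j)
    set b := thC Mc (q.2 j)
    set u := φ (clB Rc (p.1 j - p.1 i))
    set v := φ (clB Rc (q.1 j - q.1 i))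
    have hd : a • u - b • v = (a - b) • u + b • (u - v) := by
      rw [sub_smul, smul_sub]; abel
    have hab : |a - b| ≤ dist p q := by
      have h1 := (lipschitzWith_thC Mc).dist_le_mul (p.2 j) (q.2 j)
      rw [Real.dist_eq, Real.dist_eq, NNReal.coe_one, one_mul] at h1
      refine h1.trans ?_
      calc |p.2 j - q.2 j| = dist (p.2 j) (q.2 j) := (Real.dist_eq _ _).symm
        _ ≤ dist p.2 q.2 := dist_le_pi_dist _ _ j
        _ ≤ dist p q := distsnd p q
    have hu : ‖u‖ ≤ (Lφ : ℝ) * Rc := by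
      refine (norm_phi_le hφ hφ0 _).trans ?_
      exact mul_le_mul_of_nonneg_left (norm_clB_le hRc _) (by positivity)
    have hb : |b| ≤ Mc := abs_thC_le Mc hMc0 _
    have huv : ‖u - v‖ ≤ 4 * (Lφ : ℝ) * dist p q := by
      have h1 : ‖u - v‖ ≤ (Lφ : ℝ) * ‖clB Rc (p.1 j - p.1 i) - clB Rc (q.1 j - q.1 i)‖ := by
        have := hφ.dist_le_mul (clB Rc (p.1 j - p.1 i)) (clB Rc (q.1 j - q.1 i))
        simpa [dist_eq_norm] using this
      have h2 : ‖clB Rc (p.1 j - p.1 i) - clB Rc (q.1 j - q.1 i)‖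
          ≤ 2 * ‖(p.1 j - p.1 i) - (q.1 j - q.1 i)‖ := by
        have := (lipschitzWith_clB (F := Euc d) hRc).dist_le_mul
          (p.1 j - p.1 i) (q.1 j - q.1 i)
        simpa [dist_eq_norm] using this
      have h3 : ‖(p.1 j - p.1 i) - (q.1 j - q.1 i)‖ ≤ 2 * dist p q := by
        have e : (p.1 j - p.1 i) - (q.1 j - q.1 i) = (p.1 j - q.1 j) - (p.1 i - q.1 i) := by
          abel
        rw [e]
        refine (norm_sub_le _ _).trans ?_
        have hj : ‖p.1 j - q.1 j‖ ≤ dist p q := by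
          rw [← dist_eq_norm]
          exact (dist_le_pi_dist _ _ j).trans (distfst p q)
        have hi : ‖p.1 i - q.1 i‖ ≤ dist p q := by
          rw [← dist_eq_norm]
          exact (dist_le_pi_dist _ _ i).trans (distfst p q)
        linarith
      calc ‖u - v‖ ≤ (Lφ : ℝ) * (2 * (2 * dist p q)) := by
            refine h1.trans ?_
            refine mul_le_mul_of_nonneg_left (h2.trans ?_) (by positivity)
            linarith
        _ = 4 * (Lφ : ℝ) * dist p q := by ring
    calc ‖a • u - b • v‖ ≤ ‖(a - b) • u‖ + ‖b • (u - v)‖ := by rw [hd]; exact norm_add_le _ _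
      _ = |a - b| * ‖u‖ + |b| * ‖u - v‖ := by
          rw [norm_smul, norm_smul, Real.norm_eq_abs, Real.norm_eq_abs]
      _ ≤ dist p q * ((Lφ : ℝ) * Rc) + Mc * (4 * (Lφ : ℝ) * dist p q) := by
          refine add_le_add (mul_le_mul hab hu (norm_nonneg _) hdist0)
            (mul_le_mul hb huv (norm_nonneg _) hMc0)
      _ = ((Lφ : ℝ) * Rc + 4 * Mc * (Lφ : ℝ)) * dist p q := by ring
  unfold gX
  rw [← smul_sub, norm_smul, Real.norm_eq_abs, abs_inv,
    abs_of_nonneg (by positivity : (0:ℝ) ≤ (N:ℝ)), ← Finset.sum_sub_distrib]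
  calc (N:ℝ)⁻¹ * ‖∑ j, (thC Mc (p.2 j) • φ (clB Rc (p.1 j - p.1 i))
        - thC Mc (q.2 j) • φ (clB Rc (q.1 j - q.1 i)))‖
      ≤ (N:ℝ)⁻¹ * ∑ j : Fin N, ((Lφ : ℝ) * Rc + 4 * Mc * (Lφ : ℝ)) * dist p q := by
        refine mul_le_mul_of_nonneg_left ((norm_sum_le _ _).trans
          (Finset.sum_le_sum fun j _ => hterm j)) (by positivity)
    _ = ((Lφ : ℝ) * Rc + 4 * Mc * (Lφ : ℝ)) * dist p q := by
        rw [Finset.sum_const, Finset.card_univ, Fintype.card_fin, nsmul_eq_mul]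
        field_simp

include hMc hSb hSlip in
lemma dist_gM_le (hN : 0 < N) (p q : ES d N) (i : Fin N) :
    |gM S Mc p i - gM S Mc q i|
      ≤ (Mc ^ k * Sbar + Mc ^ (k+1) * ((k : ℝ) * Sbar + Mc * ((max LS 0) * ((k : ℝ)+1))))
        * dist p q := by
  have hMc0 : (0:ℝ) ≤ Mc := by linarith
  have hSb0 : 0 ≤ Sbar := le_trans (abs_nonneg _) (hSb fun _ => 0)
  have hNpos : (0:ℝ) < N := by exact_mod_cast hN
  have hdist0 : (0:ℝ) ≤ dist p q := dist_nonneg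
  set LS' := max LS 0 with hLS'
  have hLS0 : 0 ≤ LS' := le_max_right _ _
  have hdm : ∀ j : Fin N, |thC Mc (p.2 j) - thC Mc (q.2 j)| ≤ dist p q := by
    intro j
    have h1 := (lipschitzWith_thC Mc).dist_le_mul (p.2 j) (q.2 j)
    rw [Real.dist_eq, Real.dist_eq, NNReal.coe_one, one_mul] at h1
    refine h1.trans ?_
    calc |p.2 j - q.2 j| = dist (p.2 j) (q.2 j) := (Real.dist_eq _ _).symm
      _ ≤ dist p.2 q.2 := dist_le_pi_dist _ _ j
      _ ≤ dist p q := distsnd p q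
  have hdx : ∀ j : Fin N, ‖p.1 j - q.1 j‖ ≤ dist p q := by
    intro j
    rw [← dist_eq_norm]
    exact (dist_le_pi_dist _ _ j).trans (distfst p q)
  -- bound each summand difference
  have hterm : ∀ j : Fin k → Fin N,
      |(∏ l, thC Mc (p.2 (j l))) * S (Fin.cons (p.1 i) fun l => p.1 (j l))
        - (∏ l, thC Mc (q.2 (j l))) * S (Fin.cons (q.1 i) fun l => q.1 (j l))|
      ≤ (Mc ^ k * ((k : ℝ) * Sbar + Mc * (LS' * ((k : ℝ)+1)))) * dist p q := by
    intro j
    set U := ∏ l, thC Mc (p.2 (j l)) with hU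
    set U' := ∏ l, thC Mc (q.2 (j l)) with hU'
    set V := S (Fin.cons (p.1 i) fun l => p.1 (j l)) with hV
    set V' := S (Fin.cons (q.1 i) fun l => q.1 (j l)) with hV'
    have hUb : |U'| ≤ Mc ^ k := by
      rw [hU', Finset.abs_prod]
      calc ∏ l, |thC Mc (q.2 (j l))| ≤ ∏ _l : Fin k, Mc :=
            Finset.prod_le_prod (fun _ _ => abs_nonneg _) (fun l _ => abs_thC_le Mc hMc0 _)
        _ = Mc ^ k := by rw [Finset.prod_const, Finset.card_univ, Fintype.card_fin]
    have hUU : |U - U'| ≤ Mc ^ k * ((k:ℝ) * dist p q) := by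
      have h := abs_prod_sub_prod_le Finset.univ (fun l => thC Mc (p.2 (j l)))
        (fun l => thC Mc (q.2 (j l))) Mc hMc (fun l => abs_thC_le Mc hMc0 _)
        (fun l => abs_thC_le Mc hMc0 _)
      rw [Finset.card_univ, Fintype.card_fin] at h
      refine h.trans (mul_le_mul_of_nonneg_left ?_ (by positivity))
      calc ∑ l, |thC Mc (p.2 (j l)) - thC Mc (q.2 (j l))| ≤ ∑ _l : Fin k, dist p q :=
            Finset.sum_le_sum fun l _ => hdm (j l)
        _ = (k:ℝ) * dist p q := by
            rw [Finset.sum_const, Finset.card_univ, Fintype.card_fin, nsmul_eq_mul]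
    have hVb : |V| ≤ Sbar := hSb _
    have hVV : |V - V'| ≤ LS' * (((k:ℝ)+1) * dist p q) := by
      set nm : Fin (k+1) → ℝ := fun l =>
        ‖Fin.cons (α := fun _ => Euc d) (p.1 i) (fun l' => p.1 (j l')) l
        - Fin.cons (α := fun _ => Euc d) (q.1 i) (fun l' => q.1 (j l')) l‖ with hnm
      have h := hSlip (Fin.cons (p.1 i) fun l' => p.1 (j l'))
        (Fin.cons (q.1 i) fun l' => q.1 (j l'))
      have hsum : ∑ l, nm l ≤ ((k:ℝ)+1) * dist p q := by
        have hle : ∀ l : Fin (k+1), nm l ≤ dist p q := by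
          intro l
          refine Fin.cases ?_ ?_ l
          · simpa [hnm] using hdx i
          · intro l'; simpa [hnm] using hdx (j l')
        calc ∑ l, nm l ≤ ∑ _l : Fin (k+1), dist p q := Finset.sum_le_sum fun l _ => hle l
          _ = ((k:ℝ)+1) * dist p q := by
              rw [Finset.sum_const, Finset.card_univ, Fintype.card_fin, nsmul_eq_mul]
              push_cast; ring
      have hsn : 0 ≤ ∑ l, nm l := Finset.sum_nonneg fun l _ => norm_nonneg _
      calc |V - V'| ≤ LS * ∑ l, nm l := h
        _ ≤ LS' * ∑ l, nm l := mul_le_mul_of_nonneg_right (le_max_left _ _) hsn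
        _ ≤ LS' * (((k:ℝ)+1) * dist p q) := mul_le_mul_of_nonneg_left hsum hLS0
    have hdecomp : U * V - U' * V' = (U - U') * V + U' * (V - V') := by ring
    calc |U * V - U' * V'| ≤ |U - U'| * |V| + |U'| * |V - V'| := by
          rw [hdecomp]
          refine (abs_add_le _ _).trans (le_of_eq ?_)
          rw [abs_mul, abs_mul]
      _ ≤ Mc ^ k * ((k:ℝ) * dist p q) * Sbar + Mc ^ k * (LS' * (((k:ℝ)+1) * dist p q)) :=
          add_le_add (mul_le_mul hUU hVb (abs_nonneg _) (by positivity))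
            (mul_le_mul hUb hVV (abs_nonneg _) (by positivity))
      _ ≤ (Mc ^ k * ((k : ℝ) * Sbar + Mc * (LS' * ((k : ℝ)+1)))) * dist p q := by
          nlinarith [mul_nonneg (mul_nonneg (mul_nonneg (pow_nonneg hMc0 k) hLS0)
            (by positivity : (0:ℝ) ≤ (k:ℝ)+1)) hdist0, sub_nonneg.2 hMc,
            mul_nonneg (mul_nonneg (mul_nonneg (mul_nonneg (pow_nonneg hMc0 k) hLS0)
            (by positivity : (0:ℝ) ≤ (k:ℝ)+1)) hdist0) (sub_nonneg.2 hMc)]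
  -- assembly
  set c : ℝ := ((N:ℝ)^k)⁻¹ with hc
  have hc0 : 0 ≤ c := by positivity
  set A := thC Mc (p.2 i) with hA
  set A' := thC Mc (q.2 i) with hA'
  set SP := ∑ j : Fin k → Fin N, (∏ l, thC Mc (p.2 (j l)))
    * S (Fin.cons (p.1 i) fun l => p.1 (j l)) with hSP
  set SQ := ∑ j : Fin k → Fin N, (∏ l, thC Mc (q.2 (j l)))
    * S (Fin.cons (q.1 i) fun l => q.1 (j l)) with hSQ
  have hgm1 : gM S Mc p i = A * (c * SP) := rfl
  have hgm2 : gM S Mc q i = A' * (c * SQ) := rfl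
  have hcard : (Fintype.card (Fin k → Fin N) : ℝ) = (N:ℝ)^k := by
    rw [Fintype.card_fun, Fintype.card_fin, Fintype.card_fin]
    push_cast; ring
  have hSPb : |SP| ≤ (N:ℝ)^k * (Mc ^ k * Sbar) := by
    rw [hSP]
    refine (Finset.abs_sum_le_sum_abs _ _).trans ?_
    have hterm2 : ∀ j : Fin k → Fin N, |(∏ l, thC Mc (p.2 (j l)))
        * S (Fin.cons (p.1 i) fun l => p.1 (j l))| ≤ Mc ^ k * Sbar := by
      intro j
      rw [abs_mul]
      refine mul_le_mul ?_ (hSb _) (abs_nonneg _) (by positivity)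
      rw [Finset.abs_prod]
      calc ∏ l, |thC Mc (p.2 (j l))| ≤ ∏ _l : Fin k, Mc :=
            Finset.prod_le_prod (fun _ _ => abs_nonneg _) (fun l _ => abs_thC_le Mc hMc0 _)
        _ = Mc ^ k := by rw [Finset.prod_const, Finset.card_univ, Fintype.card_fin]
    calc ∑ j : Fin k → Fin N, |(∏ l, thC Mc (p.2 (j l)))
        * S (Fin.cons (p.1 i) fun l => p.1 (j l))|
        ≤ ∑ _j : Fin k → Fin N, Mc ^ k * Sbar := Finset.sum_le_sum fun j _ => hterm2 j
      _ = (N:ℝ)^k * (Mc ^ k * Sbar) := by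
          rw [Finset.sum_const, Finset.card_univ, nsmul_eq_mul, hcard]
  have hSPQ : |SP - SQ| ≤ (N:ℝ)^k
      * ((Mc ^ k * ((k : ℝ) * Sbar + Mc * (LS' * ((k : ℝ)+1)))) * dist p q) := by
    rw [hSP, hSQ, ← Finset.sum_sub_distrib]
    refine (Finset.abs_sum_le_sum_abs _ _).trans ?_
    calc ∑ j : Fin k → Fin N, |(∏ l, thC Mc (p.2 (j l)))
          * S (Fin.cons (p.1 i) fun l => p.1 (j l))
          - (∏ l, thC Mc (q.2 (j l))) * S (Fin.cons (q.1 i) fun l => q.1 (j l))|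
        ≤ ∑ _j : Fin k → Fin N,
          (Mc ^ k * ((k : ℝ) * Sbar + Mc * (LS' * ((k : ℝ)+1)))) * dist p q :=
          Finset.sum_le_sum fun j _ => hterm j
      _ = _ := by rw [Finset.sum_const, Finset.card_univ, nsmul_eq_mul, hcard]
  have hAA : |A - A'| ≤ dist p q := hdm i
  have hAb : |A'| ≤ Mc := abs_thC_le Mc hMc0 _
  have hdecomp2 : gM S Mc p i - gM S Mc q i = (A - A') * (c * SP) + A' * (c * (SP - SQ)) := by
    rw [hgm1, hgm2]; ring
  have he : ∀ X : ℝ, c * ((N:ℝ)^k * X) = X := by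
    intro X
    rw [← mul_assoc, hc, inv_mul_cancel₀ (by positivity), one_mul]
  calc |gM S Mc p i - gM S Mc q i| ≤ |A - A'| * (c * |SP|) + |A'| * (c * |SP - SQ|) := by
        rw [hdecomp2]
        refine (abs_add_le _ _).trans (le_of_eq ?_)
        rw [abs_mul, abs_mul, abs_mul, abs_mul, abs_of_nonneg hc0]
    _ ≤ dist p q * (c * ((N:ℝ)^k * (Mc ^ k * Sbar)))
        + Mc * (c * ((N:ℝ)^k * ((Mc ^ k * ((k : ℝ) * Sbar + Mc * (LS' * ((k : ℝ)+1))))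
          * dist p q))) := by
        refine add_le_add (mul_le_mul hAA (mul_le_mul_of_nonneg_left hSPb hc0)
          (by positivity) hdist0) (mul_le_mul hAb (mul_le_mul_of_nonneg_left hSPQ hc0)
          (by positivity) hMc0)
    _ = (Mc ^ k * Sbar + Mc ^ (k+1) * ((k : ℝ) * Sbar + Mc * (LS' * ((k : ℝ)+1))))
        * dist p q := by
        rw [he, he]
        ring

include hφ hφ0 hMc hRc hSb hSlip in
lemma lip_Fv (hN : 0 < N) :
    LipschitzWith (Real.toNNReal (max ((Lφ : ℝ) * Rc + 4 * Mc * (Lφ : ℝ))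
      (Mc ^ k * Sbar + Mc ^ (k+1) * ((k : ℝ) * Sbar + Mc * ((max LS 0) * ((k : ℝ)+1))))))
      (Fv φ S Mc Rc : ES d N → ES d N) := by
  set KK := max ((Lφ : ℝ) * Rc + 4 * Mc * (Lφ : ℝ))
    (Mc ^ k * Sbar + Mc ^ (k+1) * ((k : ℝ) * Sbar + Mc * ((max LS 0) * ((k : ℝ)+1)))) with hKK
  refine LipschitzWith.of_dist_le_mul fun p q => ?_
  have hcoe : (Real.toNNReal KK : ℝ) = max KK 0 := Real.coe_toNNReal' KK
  have hd0 : (0:ℝ) ≤ dist p q := dist_nonneg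
  have hKd : (0:ℝ) ≤ max KK 0 * dist p q := mul_nonneg (le_max_right _ _) hd0
  rw [hcoe, Prod.dist_eq, max_le_iff]
  constructor
  · rw [dist_pi_le_iff hKd]
    intro i
    rw [dist_eq_norm]
    refine (dist_gX_le hφ hφ0 hMc hRc hN p q i).trans ?_
    have h1 : (Lφ : ℝ) * Rc + 4 * Mc * (Lφ : ℝ) ≤ max KK 0 :=
      le_max_of_le_left (le_max_left _ _)
    exact mul_le_mul_of_nonneg_right h1 hd0
  · rw [dist_pi_le_iff hKd]
    intro i
    rw [Real.dist_eq]
    refine (dist_gM_le hMc hSb hSlip hN p q i).trans ?_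
    have h1 : Mc ^ k * Sbar + Mc ^ (k+1) * ((k : ℝ) * Sbar + Mc * ((max LS 0) * ((k : ℝ)+1)))
        ≤ max KK 0 := le_max_of_le_left (le_max_right _ _)
    exact mul_le_mul_of_nonneg_right h1 hd0

include hφ hφ0 hMc hRc hSb in
lemma bound_Fv (hN : 0 < N) (p : ES d N) :
    ‖Fv φ S Mc Rc p‖ ≤ max (Mc * ((Lφ : ℝ) * Rc)) (Mc ^ (k+1) * Sbar) := by
  have hMc0 : (0:ℝ) ≤ Mc := by linarith
  have hSb0 : 0 ≤ Sbar := le_trans (abs_nonneg _) (hSb fun _ => 0)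
  have hC0 : (0:ℝ) ≤ max (Mc * ((Lφ : ℝ) * Rc)) (Mc ^ (k+1) * Sbar) :=
    le_max_of_le_right (by positivity)
  rw [Prod.norm_def, max_le_iff]
  constructor
  · rw [pi_norm_le_iff_of_nonneg hC0]
    intro i
    exact (norm_gX_le hφ hφ0 hMc hRc hN p i).trans (le_max_left _ _)
  · rw [pi_norm_le_iff_of_nonneg hC0]
    intro i
    rw [Real.norm_eq_abs]
    exact (abs_gM_le hMc hSb hN p i).trans (le_max_right _ _)

include hφ hφ0 hMc hRc hSb hSlip in
lemma exists_sol (hN : 0 < N) {T : ℝ} (hT : 0 < T) (init : ES d N) :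
    ∃ α : ℝ → ES d N, α 0 = init ∧
      ∀ t ∈ Set.Icc (0:ℝ) T, HasDerivWithinAt α (Fv φ S Mc Rc (α t)) (Set.Icc (0:ℝ) T) t := by
  set CC := max (Mc * ((Lφ : ℝ) * Rc)) (Mc ^ (k+1) * Sbar) with hCC
  have hMc0 : (0:ℝ) ≤ Mc := by linarith
  have hSb0 : 0 ≤ Sbar := le_trans (abs_nonneg _) (hSb fun _ => 0)
  have hC0 : (0:ℝ) ≤ CC := le_max_of_le_right (by positivity)
  have hT0 : (0:ℝ) ∈ Set.Icc (0:ℝ) T := ⟨le_rfl, hT.le⟩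
  have hpl : IsPicardLindelof (fun _ : ℝ => Fv φ S Mc Rc) (tmin := 0) (tmax := T) ⟨0, hT0⟩ init
      (Real.toNNReal (CC * T + 1)) 0 (Real.toNNReal CC)
      (Real.toNNReal (max ((Lφ : ℝ) * Rc + 4 * Mc * (Lφ : ℝ))
        (Mc ^ k * Sbar + Mc ^ (k+1) * ((k : ℝ) * Sbar + Mc * ((max LS 0) * ((k : ℝ)+1)))))) := by
    constructor
    · intro t _
      exact (lip_Fv hφ hφ0 hMc hRc hSb hSlip hN).lipschitzOnWith
    · intro x _
      exact continuousOn_const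
    · intro t _ x _
      rw [Real.coe_toNNReal _ hC0]
      exact bound_Fv hφ hφ0 hMc hRc hSb hN x
    · rw [Real.coe_toNNReal _ hC0, Real.coe_toNNReal _ (by positivity)]
      have : max T 0 = T := max_eq_left hT.le
      simp only [NNReal.coe_zero, sub_zero]
      rw [this]
      linarith
  obtain ⟨α, h1, h2⟩ := hpl.exists_eq_forall_mem_Icc_hasDerivWithinAt₀
  exact ⟨α, h1, h2⟩

lemma Fv_eq_Gpl (Mc' Rc' : ℝ) (p : ES d N)
    (h1 : ∀ j, -Mc' ≤ p.2 j ∧ p.2 j ≤ Mc')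
    (h2 : ∀ i j : Fin N, ‖p.1 j - p.1 i‖ ≤ Rc') :
    Fv φ S Mc' Rc' p = Gpl φ S p := by
  unfold Fv Gpl gX gM
  simp only [Prod.mk.injEq]
  constructor
  · funext i
    congr 1
    apply Finset.sum_congr rfl
    intro j _
    rw [thC_eq (h1 j).1 (h1 j).2, clB_eq (h2 i j)]
  · funext i
    rw [show (fun j => thC Mc' (p.2 j)) = p.2 from funext fun j => thC_eq (h1 j).1 (h1 j).2]

end Lip
end Field


lemma derivWithin_Icc_to_Ici {E : Type*} [NormedAddCommGroup E] [NormedSpace ℝ E]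
    {f : ℝ → E} {f' : E} {a b t : ℝ} (ht : t ∈ Set.Ico a b)
    (h : HasDerivWithinAt f f' (Set.Icc a b) t) : HasDerivWithinAt f f' (Set.Ici t) t := by
  apply h.mono_of_mem_nhdsWithin
  refine mem_nhdsWithin.2 ⟨Set.Iio b, isOpen_Iio, ht.2, ?_⟩
  rintro x ⟨hx1, hx2⟩
  exact ⟨le_trans ht.1 hx2, le_of_lt hx1⟩

lemma const_of_deriv_zero {E : Type*} [NormedAddCommGroup E] [NormedSpace ℝ E]
    {f : ℝ → E} {T : ℝ}
    (hder : ∀ t ∈ Set.Icc (0:ℝ) T, HasDerivWithinAt f 0 (Set.Icc (0:ℝ) T) t) :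
    ∀ t ∈ Set.Icc (0:ℝ) T, f t = f 0 :=
  constant_of_has_deriv_right_zero
    (fun τ hτ => (hder τ hτ).continuousWithinAt)
    (fun τ hτ => derivWithin_Icc_to_Ici hτ (hder τ (Set.Ico_subset_Icc_self hτ)))

lemma gronwall_sol {E : Type*} [NormedAddCommGroup E] [NormedSpace ℝ E]
    {f : ℝ → E} {g : ℝ → E} {T K : ℝ}
    (hder : ∀ t ∈ Set.Icc (0:ℝ) T, HasDerivWithinAt f (g t) (Set.Icc (0:ℝ) T) t)
    (hbnd : ∀ t ∈ Set.Icc (0:ℝ) T, ‖g t‖ ≤ K * ‖f t‖) :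
    ∀ t ∈ Set.Icc (0:ℝ) T, ‖f t‖ ≤ ‖f 0‖ * Real.exp (K * t) := by
  intro t ht
  have h := norm_le_gronwallBound_of_norm_deriv_right_le (f := f) (f' := g)
    (δ := ‖f 0‖) (K := K) (ε := 0) (a := 0) (b := T)
    (fun τ hτ => (hder τ hτ).continuousWithinAt)
    (fun τ hτ => derivWithin_Icc_to_Ici hτ (hder τ (Set.Ico_subset_Icc_self hτ)))
    le_rfl
    (fun τ hτ => by simpa using hbnd τ (Set.Ico_subset_Icc_self hτ)) t ht
  rwa [gronwallBound_ε0, sub_zero] at h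

lemma pos_of_selfbound {f : ℝ → ℝ} {g : ℝ → ℝ} {T K : ℝ}
    (hder : ∀ t ∈ Set.Icc (0:ℝ) T, HasDerivWithinAt f (g t) (Set.Icc (0:ℝ) T) t)
    (hbnd : ∀ t ∈ Set.Icc (0:ℝ) T, |g t| ≤ K * |f t|)
    (h0 : 0 < f 0) : ∀ t ∈ Set.Icc (0:ℝ) T, 0 < f t := by
  have hcont : ContinuousOn f (Set.Icc 0 T) := fun τ hτ => (hder τ hτ).continuousWithinAt
  have hne : ∀ t1 ∈ Set.Icc (0:ℝ) T, f t1 ≠ 0 := by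
    intro t1 ht1 hzero
    have hmap : Set.MapsTo (fun τ : ℝ => t1 - τ) (Set.Icc 0 t1) (Set.Icc 0 T) := by
      intro τ hτ
      simp only [Set.mem_Icc] at hτ ⊢
      exact ⟨by linarith [hτ.2], by linarith [hτ.1, ht1.2]⟩
    have hderr : ∀ τ ∈ Set.Icc (0:ℝ) t1,
        HasDerivWithinAt (fun τ => f (t1 - τ)) (-(g (t1 - τ))) (Set.Icc (0:ℝ) t1) τ := by
      intro τ hτ
      have h1 := hder _ (hmap hτ)
      have h2 : HasDerivWithinAt (fun τ : ℝ => t1 - τ) (-1) (Set.Icc (0:ℝ) t1) τ :=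
        ((hasDerivAt_id τ).const_sub t1).hasDerivWithinAt
      have h3 := HasDerivWithinAt.comp τ h1 h2 hmap
      simpa [Function.comp_def] using h3
    have h := norm_le_gronwallBound_of_norm_deriv_right_le
      (f := fun τ => f (t1 - τ)) (f' := fun τ => -(g (t1 - τ)))
      (δ := 0) (K := K) (ε := 0) (a := 0) (b := t1)
      (fun τ hτ => (hderr τ hτ).continuousWithinAt)
      (fun τ hτ => derivWithin_Icc_to_Ici hτ (hderr τ (Set.Ico_subset_Icc_self hτ)))
      (by simp [hzero])
      (fun τ hτ => by
        simpa using hbnd (t1 - τ) (hmap (Set.Ico_subset_Icc_self hτ)))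
      t1 ⟨ht1.1, le_rfl⟩
    simp only [sub_self, gronwallBound_ε0, zero_mul, Real.norm_eq_abs] at h
    linarith [le_abs_self (f 0)]
  intro t ht
  by_contra hle
  push_neg at hle
  have hlt : f t < 0 := lt_of_le_of_ne hle (hne t ht)
  have hsub : Set.Icc (0:ℝ) t ⊆ Set.Icc 0 T := Set.Icc_subset_Icc le_rfl ht.2
  obtain ⟨c, hc, hfc⟩ := intermediate_value_Icc' ht.1 (hcont.mono hsub) ⟨hlt.le, h0.le⟩
  exact hne c (hsub hc) hfc

set_option maxHeartbeats 1600000 in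
/-- well-posedness of the microscopic system with mass dynamics coming
from `ψ_{S,k}`, with positivity of the weights, conservation of the total weight, and
uniform bounds. -/
theorem stmt13 {d N : ℕ} (hN : 0 < N) (T : ℝ) (hT : 0 < T) (k : ℕ)
    (xinit : Fin N → Euc d) (minit : Fin N → ℝ)
    (hsum : ∑ i, minit i = N) (hpos : ∀ i, 0 < minit i)
    (φ : Euc d → Euc d) (Lφ : ℝ≥0) (hφ : LipschitzWith Lφ φ) (hφ0 : φ 0 = 0)
    (S : (Fin (k+1) → Euc d) → ℝ) (Sbar LS : ℝ)
    (hSb : ∀ y, |S y| ≤ Sbar)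
    (hSlip : ∀ y z, |S y - S z| ≤ LS * ∑ i, ‖y i - z i‖)
    (hSskew : ∃ i j : Fin (k+1), ∀ y, S y = - S (y ∘ Equiv.swap i j)) :
    ∃ (x : ℝ → Fin N → Euc d) (m : ℝ → Fin N → ℝ),
      MicroSolS T N k φ S xinit minit x m ∧
      (∀ t ∈ Set.Icc (0:ℝ) T, ∀ i : Fin N, 0 < m t i) ∧
      (∀ t ∈ Set.Icc (0:ℝ) T, ∑ i, m t i = N) ∧
      (∃ Xbar Mbar : ℝ, ∀ t ∈ Set.Icc (0:ℝ) T, ∀ i : Fin N,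
        ‖x t i‖ ≤ Xbar ∧ |m t i| ≤ Mbar) ∧
      ∀ x' m', MicroSolS T N k φ S xinit minit x' m' →
        ∀ t ∈ Set.Icc (0:ℝ) T, x' t = x t ∧ m' t = m t := by
  classical
  have hNpos : (0:ℝ) < N := by exact_mod_cast hN
  have hSb0 : 0 ≤ Sbar := le_trans (abs_nonneg _) (hSb fun _ => 0)
  set Xb : ℝ := ‖xinit‖ * Real.exp (2 * (Lφ:ℝ) * T) with hXbdef
  have hXb0 : 0 ≤ Xb := by positivity
  set Mc0 : ℝ := (N:ℝ) + 1 with hMc0def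
  set Rc0 : ℝ := 2 * Xb + 1 with hRc0def
  have hMc0 : 1 ≤ Mc0 := by rw [hMc0def]; linarith
  have hRc0 : 0 ≤ Rc0 := by rw [hRc0def]; linarith
  -- coordinate projections of derivatives
  have projM : ∀ (α : ℝ → ES d N) (V : ES d N) (t : ℝ),
      HasDerivWithinAt α V (Set.Icc (0:ℝ) T) t → ∀ i : Fin N,
      HasDerivWithinAt (fun τ => (α τ).2 i) (V.2 i) (Set.Icc (0:ℝ) T) t := by
    intro α V t h i
    exact (((ContinuousLinearMap.proj (R := ℝ) (φ := fun _ : Fin N => ℝ) i).comp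
      (ContinuousLinearMap.snd ℝ (Fin N → Euc d) (Fin N → ℝ))).hasFDerivAt).comp_hasDerivWithinAt t h
  have projXi : ∀ (α : ℝ → ES d N) (V : ES d N) (t : ℝ),
      HasDerivWithinAt α V (Set.Icc (0:ℝ) T) t → ∀ i : Fin N,
      HasDerivWithinAt (fun τ => (α τ).1 i) (V.1 i) (Set.Icc (0:ℝ) T) t := by
    intro α V t h i
    exact (((ContinuousLinearMap.proj (R := ℝ) (φ := fun _ : Fin N => Euc d) i).comp
      (ContinuousLinearMap.fst ℝ (Fin N → Euc d) (Fin N → ℝ))).hasFDerivAt).comp_hasDerivWithinAt t h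
  have projX1 : ∀ (α : ℝ → ES d N) (V : ES d N) (t : ℝ),
      HasDerivWithinAt α V (Set.Icc (0:ℝ) T) t →
      HasDerivWithinAt (fun τ => (α τ).1) V.1 (Set.Icc (0:ℝ) T) t := by
    intro α V t h
    exact ((ContinuousLinearMap.fst ℝ (Fin N → Euc d)
      (Fin N → ℝ)).hasFDerivAt).comp_hasDerivWithinAt t h
  -- invariants for solutions of a truncated system
  have hINV : ∀ (Mc Rc : ℝ), 1 ≤ Mc → 0 ≤ Rc → ∀ α : ℝ → ES d N,
      α 0 = (xinit, minit) →
      (∀ t ∈ Set.Icc (0:ℝ) T,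
        HasDerivWithinAt α (Fv φ S Mc Rc (α t)) (Set.Icc (0:ℝ) T) t) →
      ∀ t ∈ Set.Icc (0:ℝ) T,
        (∀ i, 0 < (α t).2 i) ∧ (∑ i, (α t).2 i = (N:ℝ)) ∧ ‖(α t).1‖ ≤ Xb := by
    intro Mc Rc hMc hRc α hα0 hα
    have hMcnn : (0:ℝ) ≤ Mc := by linarith
    have hposm : ∀ i : Fin N, ∀ t ∈ Set.Icc (0:ℝ) T, 0 < (α t).2 i := by
      intro i
      apply pos_of_selfbound (g := fun τ => gM S Mc (α τ) i) (K := Mc ^ k * Sbar)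
      · intro t ht
        exact projM α _ t (hα t ht) i
      · intro t ht
        exact abs_gM_le_self hMc hSb hN (α t) i
      · show 0 < (α 0).2 i
        rw [hα0]
        exact hpos i
    have hsumc : ∀ t ∈ Set.Icc (0:ℝ) T, (∑ i, (α t).2 i) = (N:ℝ) := by
      have hz : ∀ t ∈ Set.Icc (0:ℝ) T,
          HasDerivWithinAt (fun τ => ∑ i, (α τ).2 i) 0 (Set.Icc (0:ℝ) T) t := by
        intro t ht
        have h1 : HasDerivWithinAt (fun τ => ∑ i, (α τ).2 i)
            (∑ i, (Fv φ S Mc Rc (α t)).2 i) (Set.Icc (0:ℝ) T) t :=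
          HasDerivWithinAt.fun_sum (fun i _ => projM α _ t (hα t ht) i)
        have h2 : (∑ i, (Fv φ S Mc Rc (α t)).2 i) = 0 :=
          sum_Qm_eq_zero hSskew (α t).1 (fun j => thC Mc ((α t).2 j))
        rw [h2] at h1
        exact h1
      intro t ht
      have hc := const_of_deriv_zero hz t ht
      have : (∑ i, (α t).2 i) = ∑ i, (α 0).2 i := hc
      rw [this, hα0]
      exact hsum
    have hxb : ∀ t ∈ Set.Icc (0:ℝ) T, ‖(α t).1‖ ≤ Xb := by
      have hgxb : ∀ t ∈ Set.Icc (0:ℝ) T,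
          ‖gX φ Mc Rc (α t)‖ ≤ (2 * (Lφ:ℝ)) * ‖(α t).1‖ := by
        intro t ht
        rw [pi_norm_le_iff_of_nonneg (by positivity)]
        intro i
        have hterm : ∀ j : Fin N,
            ‖thC Mc ((α t).2 j) • φ (clB Rc ((α t).1 j - (α t).1 i))‖
            ≤ (α t).2 j * (2 * (Lφ:ℝ) * ‖(α t).1‖) := by
          intro j
          rw [norm_smul, Real.norm_eq_abs]
          have h1 : |thC Mc ((α t).2 j)| ≤ (α t).2 j := by
            refine (abs_thC_le_abs Mc hMcnn _).trans ?_
            rw [abs_of_pos (hposm j t ht)]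
          have h2 : ‖φ (clB Rc ((α t).1 j - (α t).1 i))‖ ≤ 2 * (Lφ:ℝ) * ‖(α t).1‖ := by
            refine (norm_phi_le hφ hφ0 _).trans ?_
            have h3 : ‖clB Rc ((α t).1 j - (α t).1 i)‖ ≤ 2 * ‖(α t).1‖ := by
              refine (norm_clB_le_norm hRc _).trans ?_
              refine (norm_sub_le _ _).trans ?_
              have e1 := norm_le_pi_norm (α t).1 j
              have e2 := norm_le_pi_norm (α t).1 i
              linarith
            calc (Lφ:ℝ) * ‖clB Rc ((α t).1 j - (α t).1 i)‖
                ≤ (Lφ:ℝ) * (2 * ‖(α t).1‖) := mul_le_mul_of_nonneg_left h3 (by positivity)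
              _ = 2 * (Lφ:ℝ) * ‖(α t).1‖ := by ring
          exact mul_le_mul h1 h2 (norm_nonneg _) (hposm j t ht).le
        show ‖gX φ Mc Rc (α t) i‖ ≤ 2 * (Lφ:ℝ) * ‖(α t).1‖
        unfold gX
        rw [norm_smul, Real.norm_eq_abs, abs_inv, abs_of_nonneg hNpos.le]
        calc (N:ℝ)⁻¹ * ‖∑ j, thC Mc ((α t).2 j) • φ (clB Rc ((α t).1 j - (α t).1 i))‖
            ≤ (N:ℝ)⁻¹ * ∑ j, ((α t).2 j * (2 * (Lφ:ℝ) * ‖(α t).1‖)) := by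
              refine mul_le_mul_of_nonneg_left ((norm_sum_le _ _).trans
                (Finset.sum_le_sum fun j _ => hterm j)) (by positivity)
          _ = (N:ℝ)⁻¹ * ((∑ j, (α t).2 j) * (2 * (Lφ:ℝ) * ‖(α t).1‖)) := by
              rw [← Finset.sum_mul]
          _ = 2 * (Lφ:ℝ) * ‖(α t).1‖ := by
              rw [hsumc t ht, ← mul_assoc, inv_mul_cancel₀ hNpos.ne', one_mul]
      intro t ht
      have hg := gronwall_sol (f := fun τ => (α τ).1)
        (g := fun τ => gX φ Mc Rc (α τ)) (K := 2 * (Lφ:ℝ))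
        (fun τ hτ => projX1 α _ τ (hα τ hτ)) hgxb t ht
      calc ‖(α t).1‖ ≤ ‖(α 0).1‖ * Real.exp (2 * (Lφ:ℝ) * t) := hg
        _ = ‖xinit‖ * Real.exp (2 * (Lφ:ℝ) * t) := by rw [hα0]
        _ ≤ Xb := by
            rw [hXbdef]
            refine mul_le_mul_of_nonneg_left (Real.exp_le_exp.2 ?_) (norm_nonneg _)
            have hL0 : (0:ℝ) ≤ (Lφ:ℝ) := Lφ.coe_nonneg
            nlinarith [ht.2]
    exact fun t ht => ⟨fun i => hposm i t ht, hsumc t ht, hxb t ht⟩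
  -- clamp inactivity at canonical level, from the invariants
  have hclamp : ∀ α : ℝ → ES d N,
      (∀ t ∈ Set.Icc (0:ℝ) T,
        (∀ i, 0 < (α t).2 i) ∧ (∑ i, (α t).2 i = (N:ℝ)) ∧ ‖(α t).1‖ ≤ Xb) →
      ∀ t ∈ Set.Icc (0:ℝ) T, (∀ j, -Mc0 ≤ (α t).2 j ∧ (α t).2 j ≤ Mc0)
        ∧ (∀ i j : Fin N, ‖(α t).1 j - (α t).1 i‖ ≤ Rc0) := by
    intro α hI t ht
    obtain ⟨hp, hs, hx⟩ := hI t ht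
    constructor
    · intro j
      have h1 : (α t).2 j ≤ ∑ i, (α t).2 i :=
        Finset.single_le_sum (f := fun i => (α t).2 i) (fun i _ => (hp i).le)
          (Finset.mem_univ j)
      rw [hs] at h1
      exact ⟨by nlinarith [hp j], by nlinarith⟩
    · intro i j
      have h1 := norm_le_pi_norm (α t).1 j
      have h2 := norm_le_pi_norm (α t).1 i
      have h3 := norm_sub_le ((α t).1 j) ((α t).1 i)
      nlinarith
  -- existence of a solution of the canonical truncated system
  obtain ⟨α, hα0, hα⟩ := exists_sol hφ hφ0 hMc0 hRc0 hSb hSlip hN hT (xinit, minit)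
  have hIα := hINV Mc0 Rc0 hMc0 hRc0 α hα0 hα
  have hCα := hclamp α hIα
  have hplain : ∀ t ∈ Set.Icc (0:ℝ) T,
      HasDerivWithinAt α (Gpl φ S (α t)) (Set.Icc (0:ℝ) T) t := by
    intro t ht
    rw [← Fv_eq_Gpl Mc0 Rc0 (α t) (hCα t ht).1 (hCα t ht).2]
    exact hα t ht
  refine ⟨fun τ => (α τ).1, fun τ => (α τ).2, ⟨congrArg Prod.fst hα0,
    congrArg Prod.snd hα0, ?_⟩, ?_, ?_, ?_, ?_⟩
  · intro t ht i
    constructor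
    · show HasDerivWithinAt (fun τ => (α τ).1 i)
        ((N : ℝ)⁻¹ • ∑ j : Fin N, (α t).2 j • φ ((α t).1 j - (α t).1 i))
        (Set.Icc 0 T) t
      exact projXi α _ t (hplain t ht) i
    · show HasDerivWithinAt (fun τ => (α τ).2 i)
        ((N : ℝ) * ∫ s in Set.Ico ((i : ℝ) / N) (((i : ℝ) + 1) / N),
          psiSk k S s (Pc N ((α t).1)) (Pc N ((α t).2))) (Set.Icc 0 T) t
      rw [keyA hN S ((α t).1) ((α t).2) i]
      exact projM α _ t (hplain t ht) i
  · intro t ht i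
    exact (hIα t ht).1 i
  · intro t ht
    exact (hIα t ht).2.1
  · refine ⟨Xb, (N:ℝ), fun t ht i => ⟨?_, ?_⟩⟩
    · exact (norm_le_pi_norm (α t).1 i).trans (hIα t ht).2.2
    · rw [abs_of_pos ((hIα t ht).1 i)]
      have h1 : (α t).2 i ≤ ∑ j, (α t).2 j :=
        Finset.single_le_sum (f := fun j => (α t).2 j) (fun j _ => ((hIα t ht).1 j).le)
          (Finset.mem_univ i)
      rw [(hIα t ht).2.1] at h1
      exact h1
  · -- uniqueness
    intro x' m' hsol'
    obtain ⟨hx0', hm0', hd'⟩ := hsol'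
    set α' : ℝ → ES d N := fun τ => (x' τ, m' τ) with hα'def
    have hα'0 : α' 0 = (xinit, minit) := by
      rw [hα'def]
      show (x' 0, m' 0) = (xinit, minit)
      rw [hx0', hm0']
    have hder' : ∀ t ∈ Set.Icc (0:ℝ) T,
        HasDerivWithinAt α' (Gpl φ S (α' t)) (Set.Icc (0:ℝ) T) t := by
      intro t ht
      have hx : HasDerivWithinAt x'
          (fun i => (N : ℝ)⁻¹ • ∑ j : Fin N, m' t j • φ (x' t j - x' t i))
          (Set.Icc (0:ℝ) T) t :=
        hasDerivWithinAt_pi.2 fun i => (hd' t ht i).1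
      have hm : HasDerivWithinAt m' (fun i => Qm N k S (x' t) (m' t) i)
          (Set.Icc (0:ℝ) T) t := by
        refine hasDerivWithinAt_pi.2 fun i => ?_
        have h2 := (hd' t ht i).2
        rw [keyA hN S (x' t) (m' t) i] at h2
        exact h2
      exact hx.prodMk hm
    have hcont' : ContinuousOn α' (Set.Icc (0:ℝ) T) :=
      fun τ hτ => (hder' τ hτ).continuousWithinAt
    obtain ⟨B, hB⟩ := isCompact_Icc.exists_bound_of_continuousOn hcont'
    have hB0 : 0 ≤ B := le_trans (norm_nonneg _) (hB 0 ⟨le_rfl, hT.le⟩)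
    set Mc1 : ℝ := Mc0 + B with hMc1def
    set Rc1 : ℝ := Rc0 + 2 * B with hRc1def
    have hMc1 : 1 ≤ Mc1 := by rw [hMc1def]; linarith
    have hRc1 : 0 ≤ Rc1 := by rw [hRc1def]; linarith
    have hclamp1 : ∀ t ∈ Set.Icc (0:ℝ) T,
        (∀ j, -Mc1 ≤ (α' t).2 j ∧ (α' t).2 j ≤ Mc1)
        ∧ (∀ i j : Fin N, ‖(α' t).1 j - (α' t).1 i‖ ≤ Rc1) := by
      intro t ht
      have hno : ‖α' t‖ ≤ B := hB t ht
      have hm2 : ∀ j, |(α' t).2 j| ≤ B := by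
        intro j
        calc |(α' t).2 j| = ‖(α' t).2 j‖ := (Real.norm_eq_abs _).symm
          _ ≤ ‖(α' t).2‖ := norm_le_pi_norm _ j
          _ ≤ ‖α' t‖ := by rw [Prod.norm_def]; exact le_max_right _ _
          _ ≤ B := hno
      have hx2 : ∀ j, ‖(α' t).1 j‖ ≤ B := by
        intro j
        calc ‖(α' t).1 j‖ ≤ ‖(α' t).1‖ := norm_le_pi_norm _ j
          _ ≤ ‖α' t‖ := by rw [Prod.norm_def]; exact le_max_left _ _
          _ ≤ B := hno
      constructor
      · intro j
        have := hm2 j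
        rw [abs_le] at this
        exact ⟨by nlinarith [this.1], by nlinarith [this.2]⟩
      · intro i j
        have h3 := norm_sub_le ((α' t).1 j) ((α' t).1 i)
        nlinarith [hx2 i, hx2 j]
    have htr1 : ∀ t ∈ Set.Icc (0:ℝ) T,
        HasDerivWithinAt α' (Fv φ S Mc1 Rc1 (α' t)) (Set.Icc (0:ℝ) T) t := by
      intro t ht
      rw [Fv_eq_Gpl Mc1 Rc1 (α' t) (hclamp1 t ht).1 (hclamp1 t ht).2]
      exact hder' t ht
    have hIα' := hINV Mc1 Rc1 hMc1 hRc1 α' hα'0 htr1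
    have hCα' := hclamp α' hIα'
    have htr0 : ∀ t ∈ Set.Icc (0:ℝ) T,
        HasDerivWithinAt α' (Fv φ S Mc0 Rc0 (α' t)) (Set.Icc (0:ℝ) T) t := by
      intro t ht
      rw [Fv_eq_Gpl Mc0 Rc0 (α' t) (hCα' t ht).1 (hCα' t ht).2]
      exact hder' t ht
    have hcontα : ContinuousOn α (Set.Icc (0:ℝ) T) :=
      fun τ hτ => (hα τ hτ).continuousWithinAt
    have huniq := ODE_solution_unique (v := fun _ : ℝ => Fv φ S Mc0 Rc0)
      (fun _ => lip_Fv hφ hφ0 hMc0 hRc0 hSb hSlip hN)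
      hcont'
      (fun t ht => derivWithin_Icc_to_Ici ht (htr0 t (Set.Ico_subset_Icc_self ht)))
      hcontα
      (fun t ht => derivWithin_Icc_to_Ici ht (hα t (Set.Ico_subset_Icc_self ht)))
      (by rw [hα'0, hα0])
    intro t ht
    have h := huniq ht
    exact ⟨congrArg Prod.fst h, congrArg Prod.snd h⟩
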